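/- Mal'tsev's computable categoricity of the successor structure: if g : ℕ → ℕ is a computable function such that (ℕ, g) is isomorphic to (ℕ, Succ) (where Succ(n) = n+1), then the unique isomorphism from (ℕ, g) to (ℕ, Succ) is computable. -/

import Mathlib

/-- Mal'tsev's computable categoricity of `(ℕ, Succ)`: if `g : ℕ → ℕ` is computable
and `h` is an isomorphism from `(ℕ, g)` onto `(ℕ, Succ)` (a bijection with
`h (g x) = h x + 1`), then `h` is computable. -/
theorem stmt_14 (g : ℕ → ℕ) (hg : Computable g)
    (h : ℕ → ℕ) (hbij : Function.Bijective h)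
    (hcomm : ∀ x : ℕ, h (g x) = h x + 1) :
    Computable h := by
  obtain ⟨x₀, hx₀⟩ := hbij.surjective 0
  have key : ∀ n, h (g^[n] x₀) = n := by
    intro n
    induction n with
    | zero => simpa using hx₀
    | succ n ih => rw [Function.iterate_succ_apply', hcomm, ih]
  -- the iterate (x, n) ↦ g^[n] x₀ is computable
  have hit : Computable₂ (fun (_ : ℕ) (n : ℕ) => g^[n] x₀) := by
    have : Computable fun p : ℕ × ℕ =>
        Nat.rec (motive := fun _ => ℕ) x₀ (fun _ IH => g IH) p.2 :=
      Computable.nat_rec Computable.snd (Computable.const x₀)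
        ((hg.comp Computable.snd).comp Computable.snd).to₂
    refine this.of_eq fun p => ?_
    induction p.2 with
    | zero => simp
    | succ n ih => simp [Function.iterate_succ_apply', ih]
  have hp : Computable₂ (fun (x n : ℕ) => decide (g^[n] x₀ = x)) :=
    (Primrec.eq.decide.to_comp.comp (hit.comp Computable.fst Computable.snd)
      Computable.fst).to₂
  have hpart : Partrec fun x : ℕ =>
      Nat.rfind fun n => (decide (g^[n] x₀ = x) : Part Bool) :=
    Partrec.rfind hp.partrec₂
  refine hpart.of_eq_tot fun x => ?_
  apply Nat.mem_rfind.2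
  constructor
  · simp only [Part.coe_some, Part.mem_some_iff]
    symm
    rw [decide_eq_true_iff]
    exact hbij.injective (by rw [key])
  · intro m hm
    simp only [Part.coe_some, Part.mem_some_iff]
    symm
    rw [decide_eq_false_iff_not]
    intro hmx
    exact absurd (key m ▸ congrArg h hmx) (by omega)
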